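/- Let n ≥ 1, let t ∈ {1,…,n}, let δ ∈ (0,1], let γ ∈ (0,1], let w(1),…,w(n) be positive integers with partial sums W(0) = 0, W(i) = w(1)+⋯+w(i), and let ρ = W(n) = Σ_{i=1}^n w(i). For i ≤ t define q(i,t) = min{ 1, ((1+δ)/δ)·ln(4t³/γ)·w(i)/(W(t) − W(i−1)) }. Then Σ_{i=1}^{t} q(i,t) ≤ (2/δ)·ln(4n³/γ)·ln(e·ρ). -/

import Mathlib

-- harmonic telescoping lemma
lemma harmonic_aux (W : ℕ → ℕ) (t : ℕ) (ht : 1 ≤ t)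
    (hmono : ∀ i, 1 ≤ i → i ≤ t → W (i-1) < W i) :
    ∀ d s, s = t - d → 1 ≤ s →
    ∑ i ∈ Finset.Icc s t, ((W i : ℝ) - (W (i-1) : ℝ)) / ((W t : ℝ) - (W (i-1) : ℝ))
      ≤ 1 + Real.log ((W t : ℝ) - (W (s-1) : ℝ)) := by
  have hle : ∀ j, j ≤ t → ∀ i, i ≤ j → W i ≤ W j := by
    intro j
    induction j with
    | zero => intro _ i hi; simp [Nat.le_zero.mp hi]
    | succ k ih =>
      intro hkt i hik
      rcases Nat.lt_or_ge i (k+1) with h | h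
      · have h1 : W i ≤ W k := ih (by omega) i (by omega)
        have h2 : W k < W (k+1) := by
          have := hmono (k+1) (by omega) hkt
          simpa using this
        omega
      · have : i = k + 1 := by omega
        simp [this]
  intro d
  induction d with
  | zero =>
    intro s hs hs1
    have hst : s = t := by omega
    subst hst
    have h1 : W (s-1) < W s := hmono s hs1 le_rfl
    have hpos : (0:ℝ) < (W s : ℝ) - (W (s-1) : ℝ) := by
      have : (W (s-1) : ℝ) < W s := by exact_mod_cast h1
      linarith
    rw [Finset.Icc_self, Finset.sum_singleton, div_self hpos.ne']
    have : (1:ℝ) ≤ (W s : ℝ) - (W (s-1) : ℝ) := by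
      have : W (s-1) + 1 ≤ W s := h1
      have := (Nat.cast_le (α := ℝ)).2 this
      push_cast at this; linarith
    have := Real.log_nonneg this
    linarith
  | succ d ih =>
    intro s hs hs1
    have hdt : d + 1 ≤ t - 1 := by omega
    have hslt : s < t := by omega
    have hs1t : s + 1 = t - d := by omega
    have hsplit : Finset.Icc s t = insert s (Finset.Icc (s+1) t) := by
      ext x; simp [Finset.mem_Icc, Finset.mem_insert]; omega
    have hnot : s ∉ Finset.Icc (s+1) t := by simp
    rw [hsplit, Finset.sum_insert hnot]
    have htail := ih (s+1) hs1t (by omega)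
    simp only [Nat.add_sub_cancel] at htail
    -- a = W t - W (s-1), b = W t - W s
    set a : ℝ := (W t : ℝ) - (W (s-1) : ℝ) with ha_def
    set b : ℝ := (W t : ℝ) - (W s : ℝ) with hb_def
    have hWs : W (s-1) < W s := hmono s hs1 (by omega)
    have hWst : W s < W t := by
      have h1 : W s ≤ W (t-1) := hle (t-1) (by omega) s (by omega)
      have h2 : W (t-1) < W t := hmono t (by omega) le_rfl
      omega
    have hb : (0:ℝ) < b := by
      have : (W s : ℝ) < W t := by exact_mod_cast hWst
      simp [hb_def]; linarith
    have ha : (0:ℝ) < a := by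
      have h1 : (W (s-1) : ℝ) < W s := by exact_mod_cast hWs
      have : (W s : ℝ) < W t := by exact_mod_cast hWst
      simp [ha_def]; linarith
    have hnum : (W s : ℝ) - (W (s-1) : ℝ) = a - b := by rw [ha_def, hb_def]; ring
    rw [hnum]
    have hlog : Real.log b - Real.log a ≤ b/a - 1 := by
      have h1 := Real.log_le_sub_one_of_pos (div_pos hb ha)
      rwa [Real.log_div hb.ne' ha.ne'] at h1
    have hdiv : (a - b)/a = 1 - b/a := by field_simp
    rw [hdiv]
    linarith

theorem expected_remembered_le (n t : ℕ) (hn : 1 ≤ n) (ht1 : 1 ≤ t) (htn : t ≤ n)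
    (δ γ : ℝ) (hδ0 : 0 < δ) (hδ1 : δ ≤ 1) (hγ0 : 0 < γ) (hγ1 : γ ≤ 1)
    (w : ℕ → ℕ) (hw : ∀ i, 1 ≤ i → i ≤ n → 0 < w i)
    (W : ℕ → ℕ) (hW : ∀ k, W k = ∑ j ∈ Finset.Icc 1 k, w j)
    (ρ : ℕ) (hρ : ρ = W n)
    (q : ℕ → ℕ → ℝ)
    (hq : ∀ i, 1 ≤ i → i ≤ t → q i t = min 1 (((1 + δ) / δ) * Real.log (4 * t ^ 3 / γ) *
      (w i : ℝ) / ((W t : ℝ) - (W (i - 1) : ℝ)))) :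
    ∑ i ∈ Finset.Icc 1 t, q i t ≤
      (2 / δ) * Real.log (4 * n ^ 3 / γ) * Real.log (Real.exp 1 * ρ) := by
  -- W step
  have hWstep : ∀ i, 1 ≤ i → W i = W (i-1) + w i := by
    intro i hi
    obtain ⟨k, rfl⟩ : ∃ k, i = k + 1 := ⟨i - 1, by omega⟩
    rw [hW, hW, Finset.sum_Icc_succ_top (by omega)]
    simp
  have hmono : ∀ i, 1 ≤ i → i ≤ n → W (i-1) < W i := by
    intro i hi hin
    have := hw i hi hin
    have := hWstep i hi
    omega
  have hle : ∀ j, j ≤ n → ∀ i, i ≤ j → W i ≤ W j := by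
    intro j
    induction j with
    | zero => intro _ i hi; simp [Nat.le_zero.mp hi]
    | succ k ih =>
      intro hkt i hik
      rcases Nat.lt_or_ge i (k+1) with h | h
      · have h1 : W i ≤ W k := ih (by omega) i (by omega)
        have h2 : W k < W (k+1) := by
          have := hmono (k+1) (by omega) hkt; simpa using this
        omega
      · have : i = k + 1 := by omega
        simp [this]
  have hW0 : W 0 = 0 := by rw [hW]; simp
  have hWt1 : 1 ≤ W t := by
    have := hmono 1 le_rfl (by omega)
    have := hle t htn 1 ht1
    omega
  have hρ1 : 1 ≤ ρ := by
    rw [hρ]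
    have := hmono 1 le_rfl hn
    have := hle n le_rfl 1 hn
    omega
  set C : ℝ := ((1 + δ) / δ) * Real.log (4 * t ^ 3 / γ) with hC_def
  set D : ℝ := (2 / δ) * Real.log (4 * n ^ 3 / γ) with hD_def
  have ht3 : (1:ℝ) ≤ (t:ℝ)^3 := by
    have h : (1:ℝ) ≤ (t:ℝ) := by exact_mod_cast ht1
    calc (1:ℝ) = 1^3 := by norm_num
      _ ≤ (t:ℝ)^3 := pow_le_pow_left₀ (by norm_num) h 3
  have hn3 : (1:ℝ) ≤ (n:ℝ)^3 := by
    have h : (1:ℝ) ≤ (n:ℝ) := by exact_mod_cast hn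
    calc (1:ℝ) = 1^3 := by norm_num
      _ ≤ (n:ℝ)^3 := pow_le_pow_left₀ (by norm_num) h 3
  have hargt : (1:ℝ) < 4 * t ^ 3 / γ := by
    rw [lt_div_iff₀ hγ0]; nlinarith
  have hargn : (1:ℝ) < 4 * n ^ 3 / γ := by
    rw [lt_div_iff₀ hγ0]; nlinarith
  have hlogt : 0 < Real.log (4 * t ^ 3 / γ) := Real.log_pos hargt
  have hlogn : 0 < Real.log (4 * n ^ 3 / γ) := Real.log_pos hargn
  have hCpos : 0 ≤ C := by
    apply mul_nonneg _ hlogt.le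
    positivity
  have hCD : C ≤ D := by
    have h1 : Real.log (4 * t ^ 3 / γ) ≤ Real.log (4 * n ^ 3 / γ) := by
      apply Real.log_le_log (by positivity)
      have ht' : (t:ℝ) ≤ n := by exact_mod_cast htn
      have : (t:ℝ)^3 ≤ (n:ℝ)^3 := pow_le_pow_left₀ (by positivity) ht' 3
      gcongr
    have h2 : (1 + δ)/δ ≤ 2/δ := by
      gcongr
      linarith
    rw [hC_def, hD_def]
    apply mul_le_mul h2 h1 hlogt.le (by positivity)
  -- step 1: bound each q
  have hstep1 : ∑ i ∈ Finset.Icc 1 t, q i t ≤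
      C * ∑ i ∈ Finset.Icc 1 t, ((W i : ℝ) - (W (i-1) : ℝ)) / ((W t : ℝ) - (W (i-1) : ℝ)) := by
    rw [Finset.mul_sum]
    apply Finset.sum_le_sum
    intro i hi
    rw [Finset.mem_Icc] at hi
    rw [hq i hi.1 hi.2]
    have hwi : ((w i : ℝ)) = (W i : ℝ) - (W (i-1) : ℝ) := by
      have := hWstep i hi.1
      push_cast [this]; ring
    calc min 1 (C * (w i : ℝ) / ((W t : ℝ) - (W (i - 1) : ℝ)))
        ≤ C * (w i : ℝ) / ((W t : ℝ) - (W (i - 1) : ℝ)) := min_le_right _ _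
      _ = C * (((W i : ℝ) - (W (i-1) : ℝ)) / ((W t : ℝ) - (W (i-1) : ℝ))) := by
          rw [hwi, mul_div_assoc]
  have haux := harmonic_aux W t ht1 (fun i h1 h2 => hmono i h1 (le_trans h2 htn))
    (t - 1) 1 (by omega) le_rfl
  simp only [Nat.sub_self, hW0, Nat.cast_zero, sub_zero] at haux
  have hWtρ : (W t : ℝ) ≤ (ρ : ℝ) := by
    have := hle n le_rfl t htn
    rw [hρ]; exact_mod_cast this
  have hlogWt : Real.log (W t : ℝ) ≤ Real.log (ρ : ℝ) := by
    apply Real.log_le_log (by exact_mod_cast hWt1) hWtρ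
  have hlogρ0 : 0 ≤ Real.log (ρ : ℝ) := Real.log_nonneg (by exact_mod_cast hρ1)
  have hfinal : Real.log (Real.exp 1 * ρ) = 1 + Real.log (ρ:ℝ) := by
    rw [Real.log_mul (Real.exp_pos 1).ne' (Nat.cast_ne_zero.2 (by omega))]
    rw [Real.log_exp]
  calc ∑ i ∈ Finset.Icc 1 t, q i t
      ≤ C * ∑ i ∈ Finset.Icc 1 t, ((W i : ℝ) - (W (i-1) : ℝ)) / ((W t : ℝ) - (W (i-1) : ℝ)) := hstep1
    _ ≤ C * (1 + Real.log (W t : ℝ)) := mul_le_mul_of_nonneg_left haux hCpos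
    _ ≤ C * (1 + Real.log (ρ : ℝ)) := mul_le_mul_of_nonneg_left (by linarith) hCpos
    _ ≤ D * (1 + Real.log (ρ : ℝ)) := mul_le_mul_of_nonneg_right hCD (by linarith)
    _ = (2 / δ) * Real.log (4 * n ^ 3 / γ) * Real.log (Real.exp 1 * ρ) := by
        rw [hfinal, hD_def]
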